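/- arXiv:2001.08902 — 10 statements merged into one kernel-verified Lean document; each statement's English description precedes it below -/
import Mathlib

section
/- Let J, R, E be real n×n matrices with J skew-symmetric, and R, E symmetric positive semidefinite. The matrix pencil λE − (J − R) is singular (i.e., det(λE − (J − R)) = 0 as a polynomial in λ) if and only if ker J ∩ ker E ∩ ker R ≠ {0}. -/
open Matrix Polynomial

theorem dH_pencil_singular_iff_common_kernel
    (n : ℕ) (E J R : Matrix (Fin n) (Fin n) ℝ)
    (hJ : Jᵀ = -J) (hE : E.PosSemidef) (hR : R.PosSemidef) :
    ((X : ℝ[X]) • E.map C - (J - R).map C).det = 0 ↔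
      ∃ x : Fin n → ℝ, x ≠ 0 ∧ J.mulVec x = 0 ∧ E.mulVec x = 0 ∧ R.mulVec x = 0 := by
  have key : ∀ t : ℝ, ((evalRingHom t).mapMatrix ((X : ℝ[X]) • E.map C - (J - R).map C))
      = t • E - (J - R) := by
    intro t
    ext i j
    simp [Matrix.smul_apply, smul_eq_mul]
    ring
  constructor
  · intro hdet
    have h1 : (E + R - J).det = 0 := by
      have := congrArg (evalRingHom 1) hdet
      rw [RingHom.map_det, key 1, map_zero] at this
      rw [one_smul] at this
      convert this using 2
      abel
    obtain ⟨v, hv, hmul⟩ := (Matrix.exists_mulVec_eq_zero_iff).mpr h1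
    have hJv : v ⬝ᵥ J.mulVec v = 0 := by
      have h2 : v ⬝ᵥ J.mulVec v = Jᵀ.mulVec v ⬝ᵥ v := by
        rw [dotProduct_mulVec, Matrix.mulVec_transpose]
      rw [hJ] at h2
      simp [Matrix.neg_mulVec, dotProduct_comm] at h2
      linarith [h2]
    have hsum : v ⬝ᵥ E.mulVec v + v ⬝ᵥ R.mulVec v = 0 := by
      have := congrArg (fun w => v ⬝ᵥ w) hmul
      simp only [Matrix.sub_mulVec, Matrix.add_mulVec, dotProduct_sub, dotProduct_add,
        dotProduct_zero] at this
      linarith [this, hJv]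
    have hEnn : 0 ≤ v ⬝ᵥ E.mulVec v := by simpa using hE.dotProduct_mulVec_nonneg v
    have hRnn : 0 ≤ v ⬝ᵥ R.mulVec v := by simpa using hR.dotProduct_mulVec_nonneg v
    have hEv : E.mulVec v = 0 := by
      rw [← hE.dotProduct_mulVec_zero_iff]
      simp only [star_trivial]
      linarith
    have hRv : R.mulVec v = 0 := by
      rw [← hR.dotProduct_mulVec_zero_iff]
      simp only [star_trivial]
      linarith
    refine ⟨v, hv, ?_, hEv, hRv⟩
    have : (E + R - J).mulVec v = E.mulVec v + R.mulVec v - J.mulVec v := by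
      rw [Matrix.sub_mulVec, Matrix.add_mulVec]
    rw [this, hEv, hRv] at hmul
    simpa using hmul.symm
  · rintro ⟨x, hx, hJx, hEx, hRx⟩
    refine Polynomial.eq_zero_of_infinite_isRoot _ ?_
    refine Set.infinite_of_injective_forall_mem
      (f := fun t : ℝ => t) (fun a b h => h) (fun t => ?_)
    show IsRoot _ t
    have : eval t (((X : ℝ[X]) • E.map C - (J - R).map C).det)
        = (t • E - (J - R)).det := by
      rw [← key t, ← RingHom.map_det]; rfl
    rw [IsRoot, this]
    rw [← Matrix.exists_mulVec_eq_zero_iff]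
    refine ⟨x, hx, ?_⟩
    rw [Matrix.sub_mulVec, Matrix.sub_mulVec, Matrix.smul_mulVec, hEx, hJx, hRx]
    simp
end

section
/- Let P(λ) = −λʲ J + Σ_{i=0}^{k} λⁱ A_i where J is real skew-symmetric of size n×n and each A_i is real symmetric positive semidefinite of size n×n, with 0 ≤ j ≤ k. Then det P(λ) is identically zero (as a polynomial in λ) if and only if the matrix P(1) = −J + A₀ + ⋯ + A_k is singular. -/
open Matrix Polynomial

private lemma sum_mulVec' {n : Type*} [Fintype n] {ι : Type*} (s : Finset ι)
    (A : ι → Matrix n n ℝ) (v : n → ℝ) :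
    (∑ i ∈ s, A i) *ᵥ v = ∑ i ∈ s, A i *ᵥ v := by
  ext a
  simp only [Matrix.mulVec, dotProduct, Finset.sum_apply, Matrix.sum_apply,
    Finset.sum_mul]
  rw [Finset.sum_comm]

private lemma dotProduct_sum' {n : Type*} [Fintype n] {ι : Type*} (s : Finset ι)
    (v : n → ℝ) (w : ι → n → ℝ) :
    v ⬝ᵥ (∑ i ∈ s, w i) = ∑ i ∈ s, v ⬝ᵥ w i := by
  simp only [dotProduct, Finset.sum_apply, Finset.mul_sum]
  rw [Finset.sum_comm]


theorem structured_poly_singular_iff_P_one_singular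
    (n k j : ℕ) (hjk : j ≤ k)
    (J : Matrix (Fin n) (Fin n) ℝ) (A : Fin (k + 1) → Matrix (Fin n) (Fin n) ℝ)
    (hJ : Jᵀ = -J) (hA : ∀ i, (A i).PosSemidef) :
    (-((X : ℝ[X]) ^ j • J.map C) + ∑ i : Fin (k + 1), (X : ℝ[X]) ^ (i : ℕ) • (A i).map C).det = 0 ↔
      (-J + ∑ i, A i).det = 0 := by
  set M : Matrix (Fin n) (Fin n) ℝ[X] :=
    -((X : ℝ[X]) ^ j • J.map C) + ∑ i : Fin (k + 1), (X : ℝ[X]) ^ (i : ℕ) • (A i).map C with hM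
  have heval : ∀ t : ℝ, M.det.eval t = (-(t ^ j • J) + ∑ i : Fin (k + 1), t ^ (i : ℕ) • A i).det := by
    intro t
    rw [← Polynomial.coe_evalRingHom, RingHom.map_det]
    congr 1
    ext a b
    simp only [hM, RingHom.mapMatrix_apply, Matrix.map_apply, Matrix.add_apply, Matrix.neg_apply, Matrix.smul_apply,
      Matrix.sum_apply, smul_eq_mul, Polynomial.coe_evalRingHom, Polynomial.eval_add,
      Polynomial.eval_neg, Polynomial.eval_mul, Polynomial.eval_pow, Polynomial.eval_X,
      Polynomial.eval_C, Polynomial.eval_finset_sum]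
  constructor
  · intro h
    have := heval 1
    rw [h] at this
    simpa using this.symm
  · intro h
    -- get a nonzero kernel vector of -J + ∑ A i
    obtain ⟨v, hv, hv0⟩ := (Matrix.exists_mulVec_eq_zero_iff).mpr h
    -- v ⬝ᵥ J *ᵥ v = 0
    have hskew : v ⬝ᵥ J *ᵥ v = 0 := by
      have h1 : v ⬝ᵥ J *ᵥ v = (Jᵀ *ᵥ v) ⬝ᵥ v := by
        rw [Matrix.dotProduct_mulVec, Matrix.mulVec_transpose]
      rw [hJ] at h1
      have h2 : ((-J) *ᵥ v) ⬝ᵥ v = -(v ⬝ᵥ J *ᵥ v) := by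
        rw [Matrix.neg_mulVec, neg_dotProduct, dotProduct_comm]
      rw [h2] at h1
      linarith
    have hdot : v ⬝ᵥ ((-J + ∑ i, A i) *ᵥ v) = 0 := by rw [hv0, dotProduct_zero]
    have hsum : ∑ i, v ⬝ᵥ (A i) *ᵥ v = 0 := by
      have : v ⬝ᵥ ((-J + ∑ i, A i) *ᵥ v)
          = -(v ⬝ᵥ J *ᵥ v) + ∑ i, v ⬝ᵥ (A i) *ᵥ v := by
        simp [Matrix.add_mulVec, Matrix.neg_mulVec, dotProduct_add,
          sum_mulVec', dotProduct_sum']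
      rw [this, hskew] at hdot
      linarith
    have hAker : ∀ i, (A i) *ᵥ v = 0 := by
      intro i
      have hterm : v ⬝ᵥ (A i) *ᵥ v = 0 := by
        have hnn : ∀ i ∈ Finset.univ, (0 : ℝ) ≤ v ⬝ᵥ (A i) *ᵥ v := fun i _ => by
          simpa using (hA i).dotProduct_mulVec_nonneg v
        exact (Finset.sum_eq_zero_iff_of_nonneg hnn).mp hsum i (Finset.mem_univ i)
      have := ((hA i).dotProduct_mulVec_zero_iff v).mp (by simpa using hterm)
      exact this
    have hJker : J *ᵥ v = 0 := by
      have : (-J + ∑ i, A i) *ᵥ v = -(J *ᵥ v) + ∑ i, (A i) *ᵥ v := by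
        simp [Matrix.add_mulVec, Matrix.neg_mulVec, sum_mulVec']
      rw [this] at hv0
      simp [hAker] at hv0
      simpa using hv0
    -- therefore P(t) v = 0 for every t
    have hdet : ∀ t : ℝ, (-(t ^ j • J) + ∑ i : Fin (k + 1), t ^ (i : ℕ) • A i).det = 0 := by
      intro t
      rw [← Matrix.exists_mulVec_eq_zero_iff]
      refine ⟨v, hv, ?_⟩
      simp [Matrix.add_mulVec, Matrix.neg_mulVec, sum_mulVec', Matrix.smul_mulVec,
        hJker, hAker]
    have : M.det = 0 := by
      apply Polynomial.funext
      intro t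
      rw [heval t, hdet t, Polynomial.eval_zero]
    exact this
end

section
/- Let P(λ) = −λʲ J + Σ_{i=0}^{k} λⁱ A_i where J is real skew-symmetric and each A_i is real symmetric positive semidefinite (n×n), with 0 ≤ j ≤ k. Then det P(λ) ≡ 0 if and only if the kernels of J, A₀, …, A_k have a nontrivial common intersection. -/
open Matrix Polynomial

theorem structured_poly_singular_iff_common_kernel
    (n k j : ℕ) (hjk : j ≤ k)
    (J : Matrix (Fin n) (Fin n) ℝ) (A : Fin (k + 1) → Matrix (Fin n) (Fin n) ℝ)
    (hJ : Jᵀ = -J) (hA : ∀ i, (A i).PosSemidef) :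
    (-((X : ℝ[X]) ^ j • J.map C) + ∑ i : Fin (k + 1), (X : ℝ[X]) ^ (i : ℕ) • (A i).map C).det = 0 ↔
      ∃ x : Fin n → ℝ, x ≠ 0 ∧ J.mulVec x = 0 ∧ ∀ i, (A i).mulVec x = 0 := by
  classical
  set M : Matrix (Fin n) (Fin n) ℝ[X] :=
    -((X : ℝ[X]) ^ j • J.map C) + ∑ i : Fin (k + 1), (X : ℝ[X]) ^ (i : ℕ) • (A i).map C with hM
  constructor
  · intro hdet
    -- evaluate at 1
    have hmap : M.map (evalRingHom 1) = -J + ∑ i : Fin (k + 1), A i := by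
      ext a b
      simp [hM, Matrix.add_apply, Matrix.neg_apply, Matrix.smul_apply, Finset.sum_apply,
        Matrix.sum_apply, smul_eq_mul, eval_finset_sum]
    have h1 : (-J + ∑ i : Fin (k + 1), A i).det = 0 := by
      rw [← hmap, ← RingHom.mapMatrix_apply, ← RingHom.map_det, hdet, map_zero]
    obtain ⟨x, hx0, hxv⟩ := (Matrix.exists_mulVec_eq_zero_iff).mpr h1
    -- quadratic form
    have hskew : x ⬝ᵥ J *ᵥ x = 0 := by
      have h2 : x ⬝ᵥ J *ᵥ x = -(x ⬝ᵥ J *ᵥ x) := by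
        conv_lhs => rw [dotProduct_mulVec]
        have : x ᵥ* J = -(J *ᵥ x) := by
          rw [← mulVec_transpose, hJ, neg_mulVec]
        rw [this, neg_dotProduct, dotProduct_comm]
      linarith
    have hsumM : ∀ (v : Fin n → ℝ), (∑ i : Fin (k + 1), A i) *ᵥ v = ∑ i : Fin (k + 1), (A i) *ᵥ v :=
      fun v => map_sum (Matrix.mulVec.addMonoidHomLeft v) _ _
    have hdsum : ∀ (w : Fin (k+1) → Fin n → ℝ), x ⬝ᵥ (∑ i, w i) = ∑ i, x ⬝ᵥ w i := by
      intro w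
      simp only [dotProduct, Finset.sum_apply, Finset.mul_sum]
      exact Finset.sum_comm
    have hsum : ∑ i : Fin (k + 1), x ⬝ᵥ (A i) *ᵥ x = 0 := by
      have := congrArg (fun v => x ⬝ᵥ v) hxv
      simpa [add_mulVec, neg_mulVec, dotProduct_add, dotProduct_neg, hskew,
        hsumM, hdsum] using this
    have hAi : ∀ i, (A i) *ᵥ x = 0 := by
      intro i
      have hnn : ∀ i ∈ Finset.univ, (0:ℝ) ≤ x ⬝ᵥ (A i) *ᵥ x := by
        intro i _
        simpa using (hA i).dotProduct_mulVec_nonneg x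
      have := (Finset.sum_eq_zero_iff_of_nonneg hnn).mp hsum i (Finset.mem_univ i)
      exact ((hA i).dotProduct_mulVec_zero_iff x).mp (by simpa using this)
    refine ⟨x, hx0, ?_, hAi⟩
    have : -(J *ᵥ x) + ∑ i : Fin (k + 1), (A i) *ᵥ x = 0 := by
      simpa [add_mulVec, neg_mulVec, hsumM] using hxv
    simpa [hAi] using this
  · rintro ⟨x, hx0, hJx, hAx⟩
    rw [← Matrix.exists_mulVec_eq_zero_iff]
    refine ⟨C ∘ x, ?_, ?_⟩
    · intro h
      apply hx0
      funext i
      have := congrFun h i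
      simpa using this
    · have hJm : (J.map C) *ᵥ (C ∘ x) = 0 := by
        funext i
        rw [← RingHom.map_mulVec, hJx]
        simp
      have hAm : ∀ i', ((A i').map C) *ᵥ (C ∘ x) = 0 := by
        intro i'
        funext i
        rw [← RingHom.map_mulVec, hAx]
        simp
      have hsumM : (∑ i : Fin (k + 1), (X:ℝ[X]) ^ (i:ℕ) • (A i).map C) *ᵥ (C ∘ x)
          = ∑ i : Fin (k + 1), ((X:ℝ[X]) ^ (i:ℕ) • (A i).map C) *ᵥ (C ∘ x) :=
        map_sum (Matrix.mulVec.addMonoidHomLeft (C ∘ x)) _ _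
      simp [hM, add_mulVec, neg_mulVec, hsumM, smul_mulVec, hJm, hAm]
end

section
/- Let P(λ) = −λʲ J + Σ_{i=0}^{k} λⁱ A_i with J real skew-symmetric and each A_i real symmetric positive semidefinite. If α > 0 and the matrix P(α) is singular, then det P(λ) is identically zero. -/
open Matrix Polynomial

lemma sum_mulVec_aux {R : Type*} [CommSemiring R] {m ι : Type*} [Fintype m]
    (s : Finset ι) (M : ι → Matrix m m R) (v : m → R) :
    (∑ t ∈ s, M t) *ᵥ v = ∑ t ∈ s, M t *ᵥ v := by
  funext i
  simp only [Matrix.mulVec, dotProduct, Matrix.sum_apply, Finset.sum_apply,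
    Finset.sum_mul]
  rw [Finset.sum_comm]

lemma dotProduct_sum_aux {R : Type*} [CommSemiring R] {m ι : Type*} [Fintype m]
    (s : Finset ι) (v : m → R) (w : ι → m → R) :
    v ⬝ᵥ (∑ t ∈ s, w t) = ∑ t ∈ s, v ⬝ᵥ w t := by
  simp only [dotProduct, Finset.sum_apply, Finset.mul_sum]
  rw [Finset.sum_comm]

theorem structured_poly_singular_of_singular_at_pos
    (n k j : ℕ) (hjk : j ≤ k)
    (J : Matrix (Fin n) (Fin n) ℝ) (A : Fin (k + 1) → Matrix (Fin n) (Fin n) ℝ)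
    (hJ : Jᵀ = -J) (hA : ∀ i, (A i).PosSemidef)
    (α : ℝ) (hα : 0 < α)
    (hsing : (-(α ^ j • J) + ∑ i : Fin (k + 1), α ^ (i : ℕ) • A i).det = 0) :
    (-((X : ℝ[X]) ^ j • J.map C) + ∑ i : Fin (k + 1), (X : ℝ[X]) ^ (i : ℕ) • (A i).map C).det = 0 := by
  obtain ⟨v, hv0, hv⟩ := Matrix.exists_mulVec_eq_zero_iff.mpr hsing
  -- v ⬝ᵥ J *ᵥ v = 0
  have hJv0 : v ⬝ᵥ J *ᵥ v = 0 := by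
    have h1 : v ⬝ᵥ J *ᵥ v = -(v ⬝ᵥ J *ᵥ v) := by
      conv_lhs => rw [dotProduct_mulVec, ← mulVec_transpose, hJ]
      simp [neg_mulVec, dotProduct_comm]
    linarith
  -- expand v ⬝ᵥ M *ᵥ v = 0
  have hdot : ∑ i : Fin (k + 1), α ^ (i : ℕ) * (v ⬝ᵥ A i *ᵥ v) = 0 := by
    have h2 := congrArg (fun w => v ⬝ᵥ w) hv
    simp only [add_mulVec, neg_mulVec, smul_mulVec, dotProduct_add, dotProduct_neg,
      dotProduct_smul, dotProduct_zero, sum_mulVec_aux, dotProduct_sum_aux, smul_eq_mul,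
      hJv0, mul_zero, neg_zero, zero_add] at h2
    exact h2
  have hAv : ∀ i : Fin (k + 1), A i *ᵥ v = 0 := by
    intro i
    have hterm : ∀ i : Fin (k + 1), i ∈ Finset.univ → 0 ≤ α ^ (i : ℕ) * (v ⬝ᵥ A i *ᵥ v) := by
      intro i _
      have := (hA i).dotProduct_mulVec_nonneg v
      simp only [star_trivial] at this
      positivity
    have := (Finset.sum_eq_zero_iff_of_nonneg hterm).mp hdot i (Finset.mem_univ i)
    have hq : v ⬝ᵥ A i *ᵥ v = 0 := by
      rcases mul_eq_zero.mp this with h | h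
      · exact absurd h (by positivity)
      · exact h
    have := ((hA i).dotProduct_mulVec_zero_iff v).mp (by simpa using hq)
    exact this
  have hJv : J *ᵥ v = 0 := by
    have h3 : -(α ^ j • (J *ᵥ v)) + ∑ i : Fin (k + 1), α ^ (i : ℕ) • (A i *ᵥ v) = 0 := by
      simpa only [add_mulVec, neg_mulVec, smul_mulVec, sum_mulVec_aux] using hv
    simp only [hAv, smul_zero, Finset.sum_const_zero, add_zero, neg_eq_zero] at h3
    have hαj : (α : ℝ) ^ j ≠ 0 := by positivity
    exact (smul_eq_zero.mp h3).resolve_left hαj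
  rw [← Matrix.exists_mulVec_eq_zero_iff]
  refine ⟨fun i => C (v i), ?_, ?_⟩
  · intro h
    apply hv0
    funext i
    have := congrFun h i
    simpa using this
  · funext i
    have hmap : ∀ (B : Matrix (Fin n) (Fin n) ℝ), B *ᵥ v = 0 →
        (B.map C *ᵥ fun i => C (v i)) i = 0 := by
      intro B hB
      have := (RingHom.map_mulVec (C : ℝ →+* ℝ[X]) B v i).symm
      simp only [Function.comp_def] at this
      rw [this, hB]
      simp
    simp only [add_mulVec, neg_mulVec, smul_mulVec, sum_mulVec_aux,
      Pi.add_apply, Pi.neg_apply, Pi.smul_apply, Finset.sum_apply,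
      hmap J hJv, hmap (A _) (hAv _), smul_zero, Finset.sum_const_zero, add_zero, neg_zero,
      Pi.zero_apply]
end

section
/- If Y is a real symmetric positive semidefinite n×n matrix and u is a unit vector, then with Δ_Y^u = −uuᵀY − Yuuᵀ + uuᵀYuuᵀ, the matrix Y + Δ_Y^u is again symmetric positive semidefinite, and ‖Δ_Y^u‖_F² = 2‖(I − uuᵀ)Yu‖₂² + (uᵀYu)². -/
open Matrix

theorem perturbation_psd
    (n : ℕ) (Y : Matrix (Fin n) (Fin n) ℝ) (hY : Y.PosSemidef)
    (u : Fin n → ℝ) (hu : u ⬝ᵥ u = 1) :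
    (Y + (-(vecMulVec u u * Y) - Y * vecMulVec u u +
        vecMulVec u u * Y * vecMulVec u u)).PosSemidef ∧
      (∑ i, ∑ j, ((-(vecMulVec u u * Y) - Y * vecMulVec u u +
        vecMulVec u u * Y * vecMulVec u u) i j) ^ 2) =
      2 * (∑ i, (((1 - vecMulVec u u).mulVec (Y.mulVec u)) i) ^ 2) +
        (u ⬝ᵥ Y.mulVec u) ^ 2 := by
  have hsym : ∀ i j, Y i j = Y j i := by
    intro i j
    conv_lhs => rw [← hY.isHermitian.eq]
    simp [conjTranspose_apply]
  set P := vecMulVec u u with hP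
  set v := Y.mulVec u with hv
  set α := u ⬝ᵥ v with hα
  have hu' : ∑ i, u i * u i = (1 : ℝ) := hu
  have hα' : ∑ i, u i * v i = α := rfl
  constructor
  · have hPH : ((1 : Matrix (Fin n) (Fin n) ℝ) - P)ᴴ = 1 - P := by
      ext i j
      simp only [conjTranspose_apply, Matrix.sub_apply, one_apply, hP, vecMulVec_apply, star_sub,
        star_one, star_mul', star_trivial]
      rcases eq_or_ne i j with h | h
      · simp [h, mul_comm]
      · simp [h, h.symm, mul_comm]
    have h := hY.mul_mul_conjTranspose_same ((1 : Matrix (Fin n) (Fin n) ℝ) - P)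
    rw [hPH] at h
    have he : ((1 : Matrix (Fin n) (Fin n) ℝ) - P) * Y * (1 - P) =
        Y + (-(P * Y) - Y * P + P * Y * P) := by noncomm_ring
    rwa [he] at h
  · -- entrywise formulas
    have h1 : P * Y = vecMulVec u v := by
      ext i j
      simp only [mul_apply, hP, vecMulVec_apply, hv, mulVec, dotProduct]
      rw [Finset.mul_sum]
      exact Finset.sum_congr rfl fun k _ => by rw [hsym k j]; ring
    have h2 : Y * P = vecMulVec v u := by
      ext i j
      simp only [mul_apply, hP, vecMulVec_apply, hv, mulVec, dotProduct]
      rw [Finset.sum_mul]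
      exact Finset.sum_congr rfl fun k _ => by ring
    have h3 : P * Y * P = α • vecMulVec u u := by
      rw [h1, hP]
      ext i j
      rw [Matrix.smul_apply, smul_eq_mul, mul_apply, ← hα', Finset.sum_mul]
      refine Finset.sum_congr rfl fun k _ => ?_
      simp only [vecMulVec_apply]
      ring
    have key : ∀ i j, (-(P * Y) - Y * P + P * Y * P) i j
        = -(u i * v j) - v i * u j + α * (u i * u j) := by
      intro i j
      have e3 : (P * Y * P) i j = α * (u i * u j) := by
        rw [h3, Matrix.smul_apply, vecMulVec_apply, smul_eq_mul]
      rw [Matrix.add_apply, Matrix.sub_apply, Matrix.neg_apply, e3, h1, h2, vecMulVec_apply, vecMulVec_apply]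
    set V := ∑ i, v i ^ 2 with hV
    have step1 : ∀ i, ∑ j, ((-(P * Y) - Y * P + P * Y * P) i j) ^ 2
        = (u i) ^ 2 * (V - α ^ 2) + (v i) ^ 2 := by
      intro i
      have e : ∑ j, ((-(P * Y) - Y * P + P * Y * P) i j) ^ 2
          = (u i * u i) * (∑ j, v j ^ 2)
            + (2 * (u i * v i) - 2 * α * (u i * u i)) * (∑ j, u j * v j)
            + ((v i) ^ 2 - 2 * α * (u i * v i) + α ^ 2 * (u i * u i)) * (∑ j, u j * u j) := by
        simp only [Finset.mul_sum, ← Finset.sum_add_distrib]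
        exact Finset.sum_congr rfl fun j _ => by rw [key i j]; ring
      rw [e, hα', hu', ← hV]; ring
    have lhs_eq : ∑ i, ∑ j, ((-(P * Y) - Y * P + P * Y * P) i j) ^ 2 = 2 * V - α ^ 2 := by
      have e : ∑ i, ∑ j, ((-(P * Y) - Y * P + P * Y * P) i j) ^ 2
          = (∑ i, u i * u i) * (V - α ^ 2) + ∑ i, (v i) ^ 2 := by
        rw [Finset.sum_mul, ← Finset.sum_add_distrib]
        exact Finset.sum_congr rfl fun i _ => by rw [step1 i]; ring
      rw [e, hu', ← hV]; ring
    have hw : (1 - P).mulVec v = fun i => v i - α * u i := by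
      funext i
      rw [sub_mulVec, one_mulVec]
      simp only [Pi.sub_apply, mulVec, dotProduct, hP, vecMulVec_apply, mul_assoc,
        ← Finset.mul_sum, hα']
      ring
    have rhs_eq : ∑ i, ((1 - P).mulVec v i) ^ 2 = V - α ^ 2 := by
      rw [hw]
      have e : ∑ i, (v i - α * u i) ^ 2
          = (∑ i, v i ^ 2) - 2 * α * (∑ i, u i * v i) + α ^ 2 * (∑ i, u i * u i) := by
        simp only [Finset.mul_sum, ← Finset.sum_add_distrib, ← Finset.sum_sub_distrib]
        exact Finset.sum_congr rfl fun i _ => by ring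
      rw [e, hα', hu', ← hV]; ring
    rw [lhs_eq, rhs_eq]; ring
end

section
/- Let Y ∈ ℝ^{n×n}, u a unit vector, and Δ_Y^u = −uuᵀY − Yuuᵀ + uuᵀYuuᵀ. Then rank Δ_Y^u ≤ 1 if and only if u is a right eigenvector of Y (Yu ∈ span(u)) or a left eigenvector of Y (Yᵀu ∈ span(u)). -/
open Matrix

section aux

variable {n : ℕ}

lemma vmv_mulVec (x y z : Fin n → ℝ) :
    vecMulVec x y *ᵥ z = (y ⬝ᵥ z) • x := by
  ext i
  simp only [vecMulVec_apply, mulVec, dotProduct, Pi.smul_apply, smul_eq_mul,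
    Finset.sum_mul, Finset.mul_sum]
  exact Finset.sum_congr rfl fun j _ => by ring

lemma mul_vmv (Y : Matrix (Fin n) (Fin n) ℝ) (x y : Fin n → ℝ) :
    Y * vecMulVec x y = vecMulVec (Y *ᵥ x) y := by
  ext i j
  simp only [vecMulVec_apply, mul_apply, mulVec, dotProduct, Finset.sum_mul]
  exact Finset.sum_congr rfl fun k _ => by ring

lemma vmv_mul (Y : Matrix (Fin n) (Fin n) ℝ) (x y : Fin n → ℝ) :
    vecMulVec x y * Y = vecMulVec x (Yᵀ *ᵥ y) := by
  ext i j
  simp only [vecMulVec_apply, mul_apply, mulVec, dotProduct, Finset.mul_sum,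
    transpose_apply]
  exact Finset.sum_congr rfl fun k _ => by ring

lemma vmv_smul_left (c : ℝ) (x y : Fin n → ℝ) :
    vecMulVec (c • x) y = c • vecMulVec x y := by
  ext i j; simp [vecMulVec_apply]; ring

lemma vmv_smul_right (c : ℝ) (x y : Fin n → ℝ) :
    vecMulVec x (c • y) = c • vecMulVec x y := by
  ext i j; simp [vecMulVec_apply]; ring

lemma vmv_neg_left (x y : Fin n → ℝ) : vecMulVec (-x) y = -vecMulVec x y := by
  ext i j; simp [vecMulVec_apply]

lemma vmv_neg_right (x y : Fin n → ℝ) : vecMulVec x (-y) = -vecMulVec x y := by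
  ext i j; simp [vecMulVec_apply]

lemma rank_vmv_le (x y : Fin n → ℝ) : (vecMulVec x y).rank ≤ 1 := by
  rw [Matrix.rank]
  have hle : LinearMap.range (vecMulVec x y).mulVecLin ≤ Submodule.span ℝ {x} := by
    rintro v ⟨z, rfl⟩
    rw [mulVecLin_apply, vmv_mulVec]
    exact Submodule.smul_mem _ _ (Submodule.mem_span_singleton_self x)
  refine le_trans (Submodule.finrank_mono hle) ?_
  by_cases hx : x = 0
  · subst hx
    rw [Submodule.span_zero_singleton]
    simp
  · rw [finrank_span_singleton hx]

lemma key (u a b : Fin n → ℝ) (hu : u ⬝ᵥ u = 1) (hsym : u ⬝ᵥ b = a ⬝ᵥ u) :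
    (-vecMulVec u a - vecMulVec b u + (a ⬝ᵥ u) • vecMulVec u u).rank ≤ 1 ↔
      (∃ c : ℝ, b = c • u) ∨ (∃ c : ℝ, a = c • u) := by
  constructor
  · intro hrank
    by_contra hcon
    push_neg at hcon
    obtain ⟨hR, hL⟩ := hcon
    set s : ℝ := a ⬝ᵥ u with hs
    set Δ : Matrix (Fin n) (Fin n) ℝ :=
      -vecMulVec u a - vecMulVec b u + s • vecMulVec u u with hΔ
    have hua : u ⬝ᵥ a = s := by rw [hs, dotProduct_comm]
    have hua' : u ⬝ᵥ (a - s • u) = 0 := by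
      rw [dotProduct_sub, dotProduct_smul, hua, hu]; simp
    have ha'u : (a - s • u) ⬝ᵥ u = 0 := by rw [dotProduct_comm]; exact hua'
    have haa' : a ⬝ᵥ (a - s • u) = (a - s • u) ⬝ᵥ (a - s • u) := by
      nth_rewrite 1 [show a = (a - s • u) + s • u by abel]
      rw [add_dotProduct, smul_dotProduct, hua']
      simp
    have ha'0 : a - s • u ≠ 0 := by
      intro h0
      exact hL s (by rw [sub_eq_zero] at h0; exact h0)
    have haa'0 : (a - s • u) ⬝ᵥ (a - s • u) ≠ 0 :=
      fun h => ha'0 (dotProduct_self_eq_zero.mp h)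
    have hΔu : Δ *ᵥ u = -b := by
      rw [hΔ, add_mulVec, sub_mulVec, neg_mulVec, vmv_mulVec, vmv_mulVec,
        smul_mulVec, vmv_mulVec, ← hs, hu]
      simp only [one_smul]
      abel
    have hΔa' : Δ *ᵥ (a - s • u) = -(((a - s • u) ⬝ᵥ (a - s • u)) • u) := by
      rw [hΔ, add_mulVec, sub_mulVec, neg_mulVec, vmv_mulVec, vmv_mulVec,
        smul_mulVec, vmv_mulVec, hua', haa']
      simp
    have hbmem : b ∈ LinearMap.range Δ.mulVecLin :=
      ⟨-u, by rw [mulVecLin_apply, mulVec_neg, hΔu]; simp⟩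
    have humem : u ∈ LinearMap.range Δ.mulVecLin := by
      refine ⟨(-((a - s • u) ⬝ᵥ (a - s • u)))⁻¹ • (a - s • u), ?_⟩
      rw [mulVecLin_apply, mulVec_smul, hΔa', ← neg_smul, smul_smul,
        inv_mul_cancel₀ (neg_ne_zero.mpr haa'0), one_smul]
    have hli : LinearIndependent ℝ ![b, u] := by
      rw [linearIndependent_fin2]
      simp only [Matrix.cons_val_one, Matrix.head_cons, Matrix.cons_val_zero]
      refine ⟨fun h0 => by rw [h0] at hu; simp at hu, fun c hc => hR c hc.symm⟩
    have hspan : Submodule.span ℝ (Set.range ![b, u]) ≤ LinearMap.range Δ.mulVecLin := by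
      rw [Submodule.span_le]
      rintro v ⟨i, rfl⟩
      fin_cases i
      · exact hbmem
      · exact humem
    have h2 : (2 : ℕ) ≤ Δ.rank := by
      rw [Matrix.rank]
      calc (2:ℕ) = Fintype.card (Fin 2) := by simp
        _ = Module.finrank ℝ (Submodule.span ℝ (Set.range ![b, u])) :=
            (finrank_span_eq_card hli).symm
        _ ≤ Module.finrank ℝ (LinearMap.range Δ.mulVecLin) :=
            Submodule.finrank_mono hspan
    omega
  · rintro (⟨c, hc⟩ | ⟨c, hc⟩)
    · have hsc : a ⬝ᵥ u = c := by
        rw [← hsym, hc, dotProduct_smul, hu]; simp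
      have heq : -vecMulVec u a - vecMulVec b u + (a ⬝ᵥ u) • vecMulVec u u
          = vecMulVec u (-a) := by
        rw [hc, vmv_smul_left, hsc, vmv_neg_right]
        abel
      rw [heq]
      exact rank_vmv_le u (-a)
    · have hsc : a ⬝ᵥ u = c := by
        rw [hc, smul_dotProduct, hu]; simp
      have heq : -vecMulVec u a - vecMulVec b u + (a ⬝ᵥ u) • vecMulVec u u
          = vecMulVec (-b) u := by
        nth_rewrite 1 [hc]
        rw [vmv_smul_right, hsc, vmv_neg_left]
        abel
      rw [heq]
      exact rank_vmv_le (-b) u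

end aux

theorem perturbation_rank_le_one_iff
    (n : ℕ) (Y : Matrix (Fin n) (Fin n) ℝ) (u : Fin n → ℝ) (hu : u ⬝ᵥ u = 1) :
    (-(vecMulVec u u * Y) - Y * vecMulVec u u +
        vecMulVec u u * Y * vecMulVec u u).rank ≤ 1 ↔
      (∃ c : ℝ, Y.mulVec u = c • u) ∨ (∃ c : ℝ, Yᵀ.mulVec u = c • u) := by
  have hsym : u ⬝ᵥ (Y *ᵥ u) = (Yᵀ *ᵥ u) ⬝ᵥ u := by
    rw [dotProduct_mulVec, mulVec_transpose]
  have hDelta : -(vecMulVec u u * Y) - Y * vecMulVec u u +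
      vecMulVec u u * Y * vecMulVec u u
      = -vecMulVec u (Yᵀ *ᵥ u) - vecMulVec (Y *ᵥ u) u +
        ((Yᵀ *ᵥ u) ⬝ᵥ u) • vecMulVec u u := by
    rw [vmv_mul Y u u, mul_vmv, mul_vmv, vmv_mulVec, vmv_smul_left]
  rw [hDelta]
  exact key u (Yᵀ *ᵥ u) (Y *ᵥ u) hu hsym
end

section
/- Let J be skew-symmetric and X symmetric positive semidefinite, both real n×n, and let u be a unit vector. Let Δ_J = −uuᵀJ − Juuᵀ and Δ_X = −uuᵀX − Xuuᵀ + uuᵀXuuᵀ. Then Δ_J is skew-symmetric, Δ_X is symmetric with X + Δ_X positive semidefinite, and u lies in the common kernel of J + Δ_J and X + Δ_X. -/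
open Matrix

theorem structured_perturbation_properties
    (n : ℕ) (J X : Matrix (Fin n) (Fin n) ℝ)
    (hJ : Jᵀ = -J) (hX : X.PosSemidef)
    (u : Fin n → ℝ) (hu : u ⬝ᵥ u = 1) :
    (-(vecMulVec u u * J) - J * vecMulVec u u)ᵀ =
        -(-(vecMulVec u u * J) - J * vecMulVec u u) ∧
    (-(vecMulVec u u * X) - X * vecMulVec u u + vecMulVec u u * X * vecMulVec u u)ᵀ =
        (-(vecMulVec u u * X) - X * vecMulVec u u + vecMulVec u u * X * vecMulVec u u) ∧
    (X + (-(vecMulVec u u * X) - X * vecMulVec u u +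
        vecMulVec u u * X * vecMulVec u u)).PosSemidef ∧
    (J + (-(vecMulVec u u * J) - J * vecMulVec u u)).mulVec u = 0 ∧
    (X + (-(vecMulVec u u * X) - X * vecMulVec u u +
        vecMulVec u u * X * vecMulVec u u)).mulVec u = 0 := by
  set P : Matrix (Fin n) (Fin n) ℝ := vecMulVec u u with hP
  have hPt : Pᵀ = P := by
    ext i j; simp [hP, vecMulVec, mul_comm]
  have hXt : Xᵀ = X := hX.1
  have hPmul : ∀ v : Fin n → ℝ, P.mulVec v = (u ⬝ᵥ v) • u := by
    intro v
    ext i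
    simp only [hP, vecMulVec, mulVec, dotProduct, Pi.smul_apply, smul_eq_mul,
      Finset.mul_sum, Matrix.of_apply]
    rw [Finset.sum_mul]
    exact Finset.sum_congr rfl fun j _ => by ring
  have hPu : P.mulVec u = u := by
    rw [hPmul, hu, one_smul]
  have huJu : u ⬝ᵥ J.mulVec u = 0 := by
    have h1 : u ⬝ᵥ J.mulVec u = -(u ⬝ᵥ J.mulVec u) := by
      conv_lhs => rw [dotProduct_mulVec, ← mulVec_transpose, hJ, neg_mulVec,
        neg_dotProduct, dotProduct_comm]
    linarith
  refine ⟨?_, ?_, ?_, ?_, ?_⟩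
  · simp only [transpose_sub, transpose_neg, transpose_mul, hPt, hJ]
    noncomm_ring
  · simp only [transpose_add, transpose_sub, transpose_neg, transpose_mul, hPt, hXt]
    noncomm_ring
  · have key : X + (-(P * X) - X * P + P * X * P) = (1 - P) * X * (1 - P)ᴴ := by
      have : (1 - P)ᴴ = 1 - P := by
        simp [conjTranspose, hPt]
        ext i j; simp [hP, vecMulVec, mul_comm]
      rw [this]
      noncomm_ring
    rw [key]
    exact hX.mul_mul_conjTranspose_same _
  · rw [add_mulVec, sub_mulVec, neg_mulVec, ← mulVec_mulVec, ← mulVec_mulVec,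
      hPu, hPmul, huJu, zero_smul]
    simp
  · rw [add_mulVec, add_mulVec, sub_mulVec, neg_mulVec, ← mulVec_mulVec,
      ← mulVec_mulVec, ← mulVec_mulVec (M := P * X), ← mulVec_mulVec, hPu]
    abel
end

section
/- Let J be skew-symmetric and X₀, …, X_ℓ symmetric positive semidefinite, all real n×n. Suppose Δ_J, Δ_{X₀}, …, Δ_{X_ℓ} are perturbations with Δ_J skew-symmetric, each Δ_{X_i} symmetric with X_i + Δ_{X_i} still positive semidefinite, and such that the kernels of J + Δ_J and the X_i + Δ_{X_i} have a nontrivial common intersection. Then there exists a unit vector u ∈ ℝⁿ such that the structured perturbations Δ_J^u = −uuᵀJ − Juuᵀ and Δ_{X_i}^u = −uuᵀX_i − X_i uuᵀ + uuᵀX_i uuᵀ satisfy ‖Δ_J^u‖_F ≤ ‖Δ_J‖_F and ‖Δ_{X_i}^u‖_F ≤ ‖Δ_{X_i}‖_F for all i. -/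
open Matrix

namespace StructPert

variable {n : ℕ}

/-- Frobenius inner product as a double sum. -/
noncomputable def g (A B : Matrix (Fin n) (Fin n) ℝ) : ℝ := ∑ i, ∑ j, A i j * B i j

lemma g_eq_trace (A B : Matrix (Fin n) (Fin n) ℝ) : g A B = trace (Aᵀ * B) := by
  simp only [g, trace, diag, mul_apply, transpose_apply]
  rw [Finset.sum_comm]

lemma g_comm (A B : Matrix (Fin n) (Fin n) ℝ) : g A B = g B A := by
  simp only [g, mul_comm]

lemma g_add_left (A B C : Matrix (Fin n) (Fin n) ℝ) : g (A + B) C = g A C + g B C := by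
  simp [g, add_mul, Finset.sum_add_distrib]

lemma g_neg_neg (A B : Matrix (Fin n) (Fin n) ℝ) : g (-A) (-B) = g A B := by
  simp [g]

lemma g_nonneg (A : Matrix (Fin n) (Fin n) ℝ) : 0 ≤ g A A :=
  Finset.sum_nonneg fun i _ => Finset.sum_nonneg fun j _ => mul_self_nonneg _

lemma g_expand (A B : Matrix (Fin n) (Fin n) ℝ) :
    g (A + B) (A + B) = g A A + 2 * g A B + g B B := by
  rw [g_add_left, g_comm A (A + B), g_add_left, g_comm B (A + B), g_add_left,
    g_comm B A, g_comm A A]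
  ring

/-- Key inequality: if `P` is a symmetric idempotent and `Δ` agrees (up to sign) with `M`
after left/right multiplication by `P`, then the structured matrix has smaller
Frobenius norm. -/
lemma key (P M Δ : Matrix (Fin n) (Fin n) ℝ) (hP : Pᵀ = P) (hPP : P * P = P)
    (h1 : P * Δ = -(P * M)) (h2 : Δ * P = -(M * P)) :
    g (P * M + (1 - P) * (M * P)) (P * M + (1 - P) * (M * P)) ≤ g Δ Δ := by
  have hQP : (1 - P) * P = 0 := by rw [sub_mul, one_mul, hPP, sub_self]
  have hPQ : P * (1 - P) = 0 := by rw [mul_sub, mul_one, hPP, sub_self]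
  have hQQ : (1 - P) * (1 - P) = 1 - P := by
    rw [mul_sub, mul_one, hQP, sub_zero]
  have hQT : (1 - P)ᵀ = 1 - P := by rw [transpose_sub, transpose_one, hP]
  -- cross terms vanish
  have cross1 : ∀ A B : Matrix (Fin n) (Fin n) ℝ, g (P * A) ((1 - P) * B) = 0 := by
    intro A B
    rw [g_eq_trace]
    have : (P * A)ᵀ * ((1 - P) * B) = Aᵀ * (P * (1 - P)) * B := by
      rw [transpose_mul, hP]; noncomm_ring
    rw [this, hPQ]
    simp
  have cross2 : ∀ A B : Matrix (Fin n) (Fin n) ℝ,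
      g ((1 - P) * (A * P)) ((1 - P) * (B * (1 - P))) = 0 := by
    intro A B
    rw [g_eq_trace]
    have e : ((1 - P) * (A * P))ᵀ * ((1 - P) * (B * (1 - P))) =
        P * (Aᵀ * ((1 - P) * (B * (1 - P)))) := by
      rw [transpose_mul, transpose_mul, hQT, hP]
      simp only [Matrix.mul_assoc]
      rw [← Matrix.mul_assoc (1 - P) (1 - P), hQQ]
    rw [e, Matrix.trace_mul_comm]
    have e2 : Aᵀ * ((1 - P) * (B * (1 - P))) * P =
        Aᵀ * ((1 - P) * (B * ((1 - P) * P))) := by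
      simp only [Matrix.mul_assoc]
    rw [e2, hQP]
    simp
  -- decompose Δ
  have hΔ : Δ = P * Δ + ((1 - P) * (Δ * P) + (1 - P) * (Δ * (1 - P))) := by
    noncomm_ring
  have e1 : g Δ Δ = g (P * Δ) (P * Δ) + g ((1 - P) * (Δ * P)) ((1 - P) * (Δ * P))
      + g ((1 - P) * (Δ * (1 - P))) ((1 - P) * (Δ * (1 - P))) := by
    conv_lhs => rw [hΔ]
    rw [g_expand, g_expand, cross2]
    have : g (P * Δ) ((1 - P) * (Δ * P) + (1 - P) * (Δ * (1 - P))) = 0 := by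
      have h := cross1 Δ (Δ * P + Δ * (1 - P))
      rwa [mul_add] at h
    rw [this]
    ring
  have e2 : g (P * M + (1 - P) * (M * P)) (P * M + (1 - P) * (M * P)) =
      g (P * M) (P * M) + g ((1 - P) * (M * P)) ((1 - P) * (M * P)) := by
    rw [g_expand, cross1]
    ring
  have key1 : g (P * Δ) (P * Δ) = g (P * M) (P * M) := by
    rw [h1, g_neg_neg]
  have key2 : g ((1 - P) * (Δ * P)) ((1 - P) * (Δ * P)) =
      g ((1 - P) * (M * P)) ((1 - P) * (M * P)) := by
    rw [h2, mul_neg, g_neg_neg]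
  rw [e1, e2, key1, key2]
  have := g_nonneg ((1 - P) * (Δ * (1 - P)))
  linarith

lemma mul_vecMulVec' (u : Fin n → ℝ) (A : Matrix (Fin n) (Fin n) ℝ) :
    A * vecMulVec u u = vecMulVec (A *ᵥ u) u := by
  ext i j
  simp [mul_apply, vecMulVec_apply, mulVec, dotProduct, Finset.sum_mul, mul_assoc]

lemma vecMulVec_mul' (u : Fin n → ℝ) (A : Matrix (Fin n) (Fin n) ℝ) :
    vecMulVec u u * A = vecMulVec u (Aᵀ *ᵥ u) := by
  ext i j
  simp [mul_apply, vecMulVec_apply, mulVec, dotProduct, Finset.mul_sum, mul_comm,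
    mul_assoc, mul_left_comm]

lemma vecMulVec_mul_vecMulVec (a b c d : Fin n → ℝ) :
    vecMulVec a b * vecMulVec c d = (b ⬝ᵥ c) • vecMulVec a d := by
  ext i j
  simp only [mul_apply, vecMulVec_apply, Matrix.smul_apply, smul_eq_mul, dotProduct,
    Finset.sum_mul]
  apply Finset.sum_congr rfl
  intros
  ring

end StructPert

open StructPert in
theorem structured_perturbation_optimal
    (n ℓ : ℕ) (J : Matrix (Fin n) (Fin n) ℝ)
    (Xm : Fin (ℓ + 1) → Matrix (Fin n) (Fin n) ℝ)
    (hJ : Jᵀ = -J) (hX : ∀ i, (Xm i).PosSemidef)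
    (ΔJ : Matrix (Fin n) (Fin n) ℝ) (ΔX : Fin (ℓ + 1) → Matrix (Fin n) (Fin n) ℝ)
    (hΔJ : ΔJᵀ = -ΔJ) (hΔXsymm : ∀ i, (ΔX i)ᵀ = ΔX i)
    (hΔXpsd : ∀ i, (Xm i + ΔX i).PosSemidef)
    (hker : ∃ x : Fin n → ℝ, x ≠ 0 ∧ (J + ΔJ).mulVec x = 0 ∧
        ∀ i, (Xm i + ΔX i).mulVec x = 0) :
    ∃ u : Fin n → ℝ, u ⬝ᵥ u = 1 ∧
      (∑ i, ∑ j, ((-(vecMulVec u u * J) - J * vecMulVec u u) i j) ^ 2) ≤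
        (∑ i, ∑ j, (ΔJ i j) ^ 2) ∧
      ∀ m, (∑ i, ∑ j, ((-(vecMulVec u u * Xm m) - Xm m * vecMulVec u u +
          vecMulVec u u * Xm m * vecMulVec u u) i j) ^ 2) ≤
        (∑ i, ∑ j, (ΔX m i j) ^ 2) := by
  obtain ⟨x, hx0, hxJ, hxX⟩ := hker
  -- normalize x
  have hnn : 0 ≤ x ⬝ᵥ x := Finset.sum_nonneg fun i _ => mul_self_nonneg _
  have hc : 0 < x ⬝ᵥ x := by
    rcases lt_or_eq_of_le hnn with h | h
    · exact h
    · exact absurd (dotProduct_self_eq_zero.mp h.symm) hx0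
  set c : ℝ := x ⬝ᵥ x with hcdef
  set u : Fin n → ℝ := (Real.sqrt c)⁻¹ • x with hu
  have huu : u ⬝ᵥ u = 1 := by
    rw [hu, smul_dotProduct, dotProduct_smul, smul_eq_mul, smul_eq_mul, ← hcdef,
      ← mul_assoc, ← mul_inv, Real.mul_self_sqrt hc.le, inv_mul_cancel₀ hc.ne']
  have huJ : (J + ΔJ) *ᵥ u = 0 := by
    rw [hu, Matrix.mulVec_smul, hxJ, smul_zero]
  have huX : ∀ i, (Xm i + ΔX i) *ᵥ u = 0 := fun i => by
    rw [hu, Matrix.mulVec_smul, hxX i, smul_zero]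
  set P : Matrix (Fin n) (Fin n) ℝ := vecMulVec u u with hPdef
  have hPT : Pᵀ = P := by
    ext i j; simp [hPdef, vecMulVec_apply, mul_comm]
  have hPP : P * P = P := by
    rw [hPdef, vecMulVec_mul_vecMulVec, huu, one_smul]
  -- conversion between sums of squares and g
  have gsum : ∀ M : Matrix (Fin n) (Fin n) ℝ,
      (∑ i, ∑ j, (M i j) ^ 2) = g M M := by
    intro M; simp [g, sq]
  refine ⟨u, huu, ?_, ?_⟩
  · -- J part
    have hJP : (J + ΔJ) * P = 0 := by
      rw [hPdef, mul_vecMulVec', huJ]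
      ext i j; simp [vecMulVec_apply]
    have hPJ : P * (J + ΔJ) = 0 := by
      rw [hPdef, vecMulVec_mul']
      have : (J + ΔJ)ᵀ *ᵥ u = 0 := by
        rw [transpose_add, hJ, hΔJ, ← neg_add, Matrix.neg_mulVec, huJ, neg_zero]
      rw [this]
      ext i j; simp [vecMulVec_apply]
    have h1J : P * ΔJ = -(P * J) := by
      have h := hPJ; rw [mul_add] at h
      linear_combination (norm := noncomm_ring) h
    have h2J : ΔJ * P = -(J * P) := by
      have h := hJP; rw [add_mul] at h
      linear_combination (norm := noncomm_ring) h
    -- uᵀ J u = 0 by skew-symmetry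
    have hudot : (Jᵀ *ᵥ u) ⬝ᵥ u = 0 := by
      have hs : (J *ᵥ u) ⬝ᵥ u = -((J *ᵥ u) ⬝ᵥ u) := by
        conv_lhs => rw [dotProduct_comm, Matrix.dotProduct_mulVec,
          ← Matrix.mulVec_transpose, hJ, Matrix.neg_mulVec, neg_dotProduct]
      have h0 : (J *ᵥ u) ⬝ᵥ u = 0 := by linarith
      rw [hJ, Matrix.neg_mulVec, neg_dotProduct, h0, neg_zero]
    have hPJP : P * J * P = 0 := by
      rw [hPdef, vecMulVec_mul', vecMulVec_mul_vecMulVec, hudot, zero_smul]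
    have e : P * J + (1 - P) * (J * P) = P * J + J * P := by
      rw [sub_mul, one_mul, ← Matrix.mul_assoc, hPJP, sub_zero]
    have etarget : -(P * J) - J * P = -(P * J + (1 - P) * (J * P)) := by
      rw [e]; noncomm_ring
    rw [gsum, gsum, etarget, g_neg_neg]
    exact key P J ΔJ hPT hPP h1J h2J
  · -- X part
    intro m
    have hsymm : (Xm m + ΔX m)ᵀ = Xm m + ΔX m := by
      have h := (hΔXpsd m).1
      rwa [Matrix.IsHermitian, conjTranspose_eq_transpose_of_trivial] at h
    have hXP : (Xm m + ΔX m) * P = 0 := by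
      rw [hPdef, mul_vecMulVec', huX m]
      ext i j; simp [vecMulVec_apply]
    have hPX : P * (Xm m + ΔX m) = 0 := by
      rw [hPdef, vecMulVec_mul', hsymm, huX m]
      ext i j; simp [vecMulVec_apply]
    have h1X : P * ΔX m = -(P * Xm m) := by
      have h := hPX; rw [mul_add] at h
      linear_combination (norm := noncomm_ring) h
    have h2X : ΔX m * P = -(Xm m * P) := by
      have h := hXP; rw [add_mul] at h
      linear_combination (norm := noncomm_ring) h
    have etarget : -(P * Xm m) - Xm m * P + P * Xm m * P =
        -(P * Xm m + (1 - P) * (Xm m * P)) := by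
      rw [sub_mul, one_mul, ← Matrix.mul_assoc]
      noncomm_ring
    rw [gsum, gsum, etarget, g_neg_neg]
    exact key P (Xm m) (ΔX m) hPT hPP h1X h2X
end

section
/- Let J be skew-symmetric and X₀, …, X_ℓ symmetric positive semidefinite real n×n matrices such that the kernel of −J + X₀ + ⋯ + X_ℓ has dimension r > 0. Then there exists an orthogonal matrix U ∈ ℝ^{n×n} such that UᵀJU, UᵀX₀U, …, UᵀX_ℓU are all block diagonal of the form diag(B, 0) with B of size (n−r)×(n−r), and the (n−r)×(n−r) matrix −J̃ + X̃₀ + ⋯ + X̃_ℓ formed from the leading blocks is invertible. -/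
open Matrix

private lemma sum_castLE_aux {M : Type*} [AddCommMonoid M] {m n : ℕ} (h : m ≤ n)
    (f : Fin n → M) (hf : ∀ j : Fin n, m ≤ (j : ℕ) → f j = 0) :
    ∑ j, f j = ∑ q : Fin m, f (Fin.castLE h q) := by
  classical
  let g : ℕ → M := fun k => if hk : k < n then f ⟨k, hk⟩ else 0
  have h1 : ∀ j : Fin n, f j = g (j : ℕ) := fun j => by simp [g, j.isLt]
  calc ∑ j : Fin n, f j = ∑ j : Fin n, g (j : ℕ) :=
        Finset.sum_congr rfl fun j _ => h1 j
    _ = ∑ k ∈ Finset.range n, g k := Fin.sum_univ_eq_sum_range g n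
    _ = ∑ k ∈ Finset.range m, g k := by
        refine (Finset.sum_subset (Finset.range_subset_range.2 h) ?_).symm
        intro k hk hk'
        simp only [Finset.mem_range] at hk hk'
        simp only [g, dif_pos hk]
        exact hf ⟨k, hk⟩ (le_of_not_gt hk')
    _ = ∑ q : Fin m, g (q : ℕ) := (Fin.sum_univ_eq_sum_range g m).symm
    _ = ∑ q : Fin m, f (Fin.castLE h q) := by
        refine Finset.sum_congr rfl fun q _ => ?_
        have hq : (q : ℕ) < n := lt_of_lt_of_le q.isLt h
        simp only [g, dif_pos hq]
        rfl

private lemma sum_mulVec_aux_s18 {n l : ℕ} (Xm : Fin l → Matrix (Fin n) (Fin n) ℝ)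
    (v : Fin n → ℝ) : (∑ i, Xm i) *ᵥ v = ∑ i, Xm i *ᵥ v := by
  ext k
  simp [Matrix.mulVec, dotProduct, Matrix.sum_apply, Finset.sum_apply, Finset.sum_mul]
  rw [Finset.sum_comm]

theorem orthogonal_block_decomposition
    (n ℓ : ℕ) (J : Matrix (Fin n) (Fin n) ℝ)
    (Xm : Fin (ℓ + 1) → Matrix (Fin n) (Fin n) ℝ)
    (hJ : Jᵀ = -J) (hX : ∀ i, (Xm i).PosSemidef)
    (r : ℕ)
    (hr : r = Module.finrank ℝ
        (LinearMap.ker (Matrix.mulVecLin (-J + ∑ i, Xm i))))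
    (hrpos : 0 < r) :
    ∃ U : Matrix (Fin n) (Fin n) ℝ,
      U ∈ Matrix.orthogonalGroup (Fin n) ℝ ∧
      (∀ i j : Fin n, (n - r ≤ (i : ℕ) ∨ n - r ≤ (j : ℕ)) → (Uᵀ * J * U) i j = 0) ∧
      (∀ m, ∀ i j : Fin n, (n - r ≤ (i : ℕ) ∨ n - r ≤ (j : ℕ)) →
          (Uᵀ * Xm m * U) i j = 0) ∧
      IsUnit ((Uᵀ * (-J + ∑ i, Xm i) * U).submatrix
          (Fin.castLE (Nat.sub_le n r)) (Fin.castLE (Nat.sub_le n r))) := by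
  classical
  set A : Matrix (Fin n) (Fin n) ℝ := -J + ∑ i, Xm i with hAdef
  -- symmetry facts
  have hXt : ∀ m, (Xm m)ᵀ = Xm m := fun m => (hX m).1
  have hAt : Aᵀ = J + ∑ i, Xm i := by
    rw [hAdef, Matrix.transpose_add, Matrix.transpose_neg, hJ, neg_neg,
      Matrix.transpose_sum]
    exact congrArg _ (Finset.sum_congr rfl fun m _ => hXt m)
  -- kernel elements are killed by J and each Xm
  have hker : ∀ v : Fin n → ℝ, A *ᵥ v = 0 → J *ᵥ v = 0 ∧ ∀ m, Xm m *ᵥ v = 0 := by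
    intro v hv
    have hJv : v ⬝ᵥ (J *ᵥ v) = 0 := by
      have h1 : v ⬝ᵥ (J *ᵥ v) = (Jᵀ *ᵥ v) ⬝ᵥ v := by
        rw [Matrix.dotProduct_mulVec, ← Matrix.mulVec_transpose]
      rw [hJ, Matrix.neg_mulVec, neg_dotProduct,
        dotProduct_comm (J *ᵥ v) v] at h1
      linarith
    have hsum : ∑ m, v ⬝ᵥ (Xm m *ᵥ v) = 0 := by
      have h0 : v ⬝ᵥ (A *ᵥ v) = 0 := by rw [hv, dotProduct_zero]
      rw [hAdef, Matrix.add_mulVec, Matrix.neg_mulVec, dotProduct_add,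
        dotProduct_neg, hJv, neg_zero, zero_add, sum_mulVec_aux_s18] at h0
      rw [← h0]
      simp only [dotProduct, Finset.sum_apply, Finset.mul_sum]
      rw [Finset.sum_comm]
    have hXmv : ∀ m, Xm m *ᵥ v = 0 := by
      intro m
      have hnn : ∀ m ∈ Finset.univ, (0:ℝ) ≤ v ⬝ᵥ (Xm m *ᵥ v) := by
        intro m _
        simpa using (hX m).dotProduct_mulVec_nonneg v
      have := (Finset.sum_eq_zero_iff_of_nonneg hnn).mp hsum m (Finset.mem_univ m)
      exact ((hX m).dotProduct_mulVec_zero_iff v).mp (by simpa using this)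
    refine ⟨?_, hXmv⟩
    have := hv
    rw [hAdef, Matrix.add_mulVec, Matrix.neg_mulVec, sum_mulVec_aux_s18] at this
    have hs : ∑ i, Xm i *ᵥ v = 0 := Finset.sum_eq_zero fun m _ => hXmv m
    rw [hs, add_zero, neg_eq_zero] at this
    exact this
  have hAker : ∀ v : Fin n → ℝ, A *ᵥ v = 0 → Aᵀ *ᵥ v = 0 := by
    intro v hv
    rw [hAt, Matrix.add_mulVec, (hker v hv).1, sum_mulVec_aux_s18, zero_add]
    exact Finset.sum_eq_zero fun m _ => (hker v hv).2 m
  -- set up Euclidean space and the kernel as a subspace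
  set e : EuclideanSpace ℝ (Fin n) ≃ₗ[ℝ] (Fin n → ℝ) := WithLp.linearEquiv 2 ℝ _ with he
  set K' : Submodule ℝ (EuclideanSpace ℝ (Fin n)) :=
    LinearMap.ker (A.mulVecLin ∘ₗ e.toLinearMap) with hK'def
  have hmemK' : ∀ x : EuclideanSpace ℝ (Fin n), x ∈ K' ↔ A *ᵥ (e x) = 0 := fun x =>
    LinearMap.mem_ker
  have hrn : r ≤ n := by
    rw [hr]
    have h1 := Submodule.finrank_le (LinearMap.ker A.mulVecLin)
    rwa [Module.finrank_fin_fun] at h1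
  have hK'r : Module.finrank ℝ K' = r := by
    have h3 : K' = (LinearMap.ker A.mulVecLin).comap e.toLinearMap :=
      LinearMap.ker_comp _ _
    rw [h3, Submodule.comap_equiv_eq_map_symm, LinearEquiv.finrank_map_eq, hr]
  have hKperp : Module.finrank ℝ K'ᗮ = n - r := by
    have h4 := Submodule.finrank_add_finrank_orthogonal K'
    rw [hK'r, finrank_euclideanSpace_fin] at h4
    omega
  -- orthonormal bases of K'ᗮ and K'
  let b1 : OrthonormalBasis (Fin (n - r)) ℝ K'ᗮ :=
    (stdOrthonormalBasis ℝ K'ᗮ).reindex (finCongr hKperp)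
  let b2 : OrthonormalBasis (Fin r) ℝ K' :=
    (stdOrthonormalBasis ℝ K').reindex (finCongr hK'r)
  -- the adapted orthonormal family
  let uE : Fin n → EuclideanSpace ℝ (Fin n) := fun i =>
    if h : (i : ℕ) < n - r then ((b1 ⟨(i : ℕ), h⟩ : K'ᗮ) : EuclideanSpace ℝ (Fin n))
    else ((b2 ⟨(i : ℕ) - (n - r), by have := i.isLt; omega⟩ : K') :
      EuclideanSpace ℝ (Fin n))
  let u : Fin n → (Fin n → ℝ) := fun i => e (uE i)
  have huE_perp : ∀ i : Fin n, (hi : (i : ℕ) < n - r) → uE i ∈ K'ᗮ := by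
    intro i hi
    simp only [uE, dif_pos hi]
    exact (b1 ⟨(i : ℕ), hi⟩).2
  have huE_mem : ∀ i : Fin n, n - r ≤ (i : ℕ) → uE i ∈ K' := by
    intro i hi
    simp only [uE, dif_neg (not_lt.2 hi)]
    exact (b2 _).2
  have huK : ∀ i : Fin n, n - r ≤ (i : ℕ) → A *ᵥ u i = 0 := fun i hi =>
    (hmemK' (uE i)).mp (huE_mem i hi)
  -- orthonormality in dot-product form
  have hdot : ∀ x y : EuclideanSpace ℝ (Fin n), (e x) ⬝ᵥ (e y) = (inner ℝ x y : ℝ) :=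
    fun x y => by rw [EuclideanSpace.inner_eq_star_dotProduct, star_trivial, dotProduct_comm]; rfl
  have honu : ∀ i j : Fin n, u i ⬝ᵥ u j = if i = j then 1 else 0 := by
    intro i j
    rw [hdot]
    by_cases hij : i = j
    · subst hij
      simp only [if_pos rfl]
      by_cases hi : (i : ℕ) < n - r
      · simp only [uE, dif_pos hi]
        rw [← Submodule.coe_inner]
        exact (orthonormal_iff_ite.mp b1.orthonormal _ _).trans (if_pos rfl)
      · simp only [uE, dif_neg hi]
        rw [← Submodule.coe_inner]
        exact (orthonormal_iff_ite.mp b2.orthonormal _ _).trans (if_pos rfl)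
    · simp only [if_neg hij]
      have hij' : (i : ℕ) ≠ (j : ℕ) := fun h => hij (Fin.ext h)
      by_cases hi : (i : ℕ) < n - r <;> by_cases hj : (j : ℕ) < n - r
      · simp only [uE, dif_pos hi, dif_pos hj]
        rw [← Submodule.coe_inner]
        refine (orthonormal_iff_ite.mp b1.orthonormal _ _).trans (if_neg ?_)
        intro h
        exact hij' (by simpa [Fin.mk.injEq] using h)
      · exact Submodule.inner_left_of_mem_orthogonal (huE_mem j (not_lt.1 hj))
          (huE_perp i hi)
      · exact Submodule.inner_right_of_mem_orthogonal (huE_mem i (not_lt.1 hi))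
          (huE_perp j hj)
      · simp only [uE, dif_neg hi, dif_neg hj]
        rw [← Submodule.coe_inner]
        refine (orthonormal_iff_ite.mp b2.orthonormal _ _).trans (if_neg ?_)
        intro h
        have := congrArg Fin.val h
        simp only at this
        have hi' := i.isLt
        have hj' := j.isLt
        omega
  -- the orthogonal matrix
  set U : Matrix (Fin n) (Fin n) ℝ := Matrix.of (fun a b => u b a) with hUdef
  have hUtU : Uᵀ * U = 1 := by
    ext i j
    have h1 : (Uᵀ * U) i j = u i ⬝ᵥ u j := by
      simp [hUdef, Matrix.mul_apply, dotProduct]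
    rw [h1, honu, Matrix.one_apply]
  have hUUt : U * Uᵀ = 1 := mul_eq_one_comm.mp hUtU
  have hUorth : U ∈ Matrix.orthogonalGroup (Fin n) ℝ := by
    rw [Matrix.mem_orthogonalGroup_iff]
    show U * star U = 1
    have hstar : star U = Uᵀ := rfl
    rw [hstar]; exact hUUt
  -- entries of conjugations
  have hentry : ∀ (M : Matrix (Fin n) (Fin n) ℝ) (i j : Fin n),
      (Uᵀ * M * U) i j = u i ⬝ᵥ (M *ᵥ u j) := by
    intro M i j
    simp [hUdef, Matrix.mul_apply, Matrix.mulVec, dotProduct, Finset.sum_mul,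
      Finset.mul_sum]
    rw [Finset.sum_comm]
    exact Finset.sum_congr rfl fun k _ => Finset.sum_congr rfl fun l _ => by ring
  have hzero : ∀ M : Matrix (Fin n) (Fin n) ℝ,
      (∀ v, A *ᵥ v = 0 → M *ᵥ v = 0 ∧ Mᵀ *ᵥ v = 0) →
      ∀ i j : Fin n, (n - r ≤ (i : ℕ) ∨ n - r ≤ (j : ℕ)) → (Uᵀ * M * U) i j = 0 := by
    intro M hM i j hij
    rw [hentry]
    rcases hij with h | h
    · have hui := (hM (u i) (huK i h)).2
      rw [Matrix.dotProduct_mulVec, ← Matrix.mulVec_transpose, hui,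
        zero_dotProduct]
    · rw [(hM (u j) (huK j h)).1, dotProduct_zero]
  refine ⟨U, hUorth, ?_, ?_, ?_⟩
  · refine hzero J (fun v hv => ⟨(hker v hv).1, ?_⟩)
    rw [hJ, Matrix.neg_mulVec, (hker v hv).1, neg_zero]
  · intro m
    refine hzero (Xm m) (fun v hv => ⟨(hker v hv).2 m, ?_⟩)
    rw [hXt m]
    exact (hker v hv).2 m
  · -- invertibility of the leading block
    set B := (Uᵀ * A * U).submatrix (Fin.castLE (Nat.sub_le n r))
      (Fin.castLE (Nat.sub_le n r)) with hBdef
    rw [Matrix.isUnit_iff_isUnit_det, isUnit_iff_ne_zero]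
    intro hdet
    obtain ⟨x, hx0, hxv⟩ := (Matrix.exists_mulVec_eq_zero_iff).mpr hdet
    apply hx0
    -- extend x by zero
    set v : Fin n → ℝ := fun i =>
      if h : (i : ℕ) < n - r then x ⟨(i : ℕ), h⟩ else 0 with hvdef
    have hvz : ∀ j : Fin n, n - r ≤ (j : ℕ) → v j = 0 := by
      intro j hj
      simp [hvdef, not_lt.2 hj]
    have hAzero : ∀ i j : Fin n, (n - r ≤ (i : ℕ) ∨ n - r ≤ (j : ℕ)) →
        (Uᵀ * A * U) i j = 0 :=
      hzero A (fun w hw => ⟨hw, hAker w hw⟩)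
    have h5 : (Uᵀ * A * U) *ᵥ v = 0 := by
      ext i
      show ∑ j, (Uᵀ * A * U) i j * v j = (0 : Fin n → ℝ) i
      by_cases hi : (i : ℕ) < n - r
      · have h6 : ∀ j : Fin n, n - r ≤ (j : ℕ) → (Uᵀ * A * U) i j * v j = 0 := by
          intro j hj; rw [hvz j hj, mul_zero]
        rw [sum_castLE_aux (Nat.sub_le n r) _ h6]
        have h7 : ∀ q : Fin (n - r),
            (Uᵀ * A * U) i (Fin.castLE (Nat.sub_le n r) q) * v (Fin.castLE (Nat.sub_le n r) q)
            = B ⟨(i : ℕ), hi⟩ q * x q := by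
          intro q
          have hvq : v (Fin.castLE (Nat.sub_le n r) q) = x q := by
            simp [hvdef, q.isLt]
          rw [hvq, hBdef]
          simp only [Matrix.submatrix_apply]
          congr 1
        have h8 := hxv
        have h9 : (B *ᵥ x) ⟨(i : ℕ), hi⟩ = 0 := by rw [h8]; rfl
        rw [Finset.sum_congr rfl fun q _ => h7 q]
        exact h9
      · refine Finset.sum_eq_zero fun j _ => ?_
        rw [hAzero i j (Or.inl (not_lt.1 hi)), zero_mul]
    -- conclude U *ᵥ v lies in the kernel
    have h10 : A *ᵥ (U *ᵥ v) = 0 := by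
      have h11 : Uᵀ *ᵥ (A *ᵥ (U *ᵥ v)) = 0 := by
        rw [Matrix.mulVec_mulVec, Matrix.mulVec_mulVec]
        exact h5
      have h12 : (U * Uᵀ) *ᵥ (A *ᵥ (U *ᵥ v)) = 0 := by
        rw [← Matrix.mulVec_mulVec, h11, Matrix.mulVec_zero]
      rwa [hUUt, Matrix.one_mulVec] at h12
    have h13 : e.symm (U *ᵥ v) ∈ K' := by
      rw [hmemK']
      rw [LinearEquiv.apply_symm_apply]
      exact h10
    -- and also in the orthogonal complement
    have h14 : U *ᵥ v = ∑ j, v j • u j := by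
      ext k
      simp [hUdef, Matrix.mulVec, dotProduct, Finset.sum_apply, mul_comm]
    have h15 : e.symm (U *ᵥ v) ∈ K'ᗮ := by
      rw [h14, map_sum]
      refine Submodule.sum_mem _ fun j _ => ?_
      by_cases hj : (j : ℕ) < n - r
      · rw [_root_.map_smul]
        refine Submodule.smul_mem _ _ ?_
        have : e.symm (u j) = uE j := by
          simp only [u]; exact e.symm_apply_apply _
        rw [this]
        exact huE_perp j hj
      · rw [hvz j (not_lt.1 hj), zero_smul, map_zero]
        exact Submodule.zero_mem _
    have h16 : e.symm (U *ᵥ v) = 0 := by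
      have := Submodule.inf_orthogonal_eq_bot K'
      have hmem : e.symm (U *ᵥ v) ∈ K' ⊓ K'ᗮ := ⟨h13, h15⟩
      rw [this] at hmem
      exact hmem
    have h17 : U *ᵥ v = 0 := by
      have := congrArg e h16
      rwa [LinearEquiv.apply_symm_apply, map_zero] at this
    have h18 : v = 0 := by
      have h19 := congrArg (fun z => Uᵀ *ᵥ z) h17
      simpa [Matrix.mulVec_mulVec, hUtU] using h19
    ext q
    have h20 : v (Fin.castLE (Nat.sub_le n r) q) = x q := by
      simp [hvdef, q.isLt]
    rw [← h20, h18]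
    rfl
end

section
/- Let M, D, K be real symmetric positive semidefinite n×n matrices and G real skew-symmetric. The quadratic matrix polynomial P(λ) = λ²M − λ(G − D) + K satisfies det P(λ) ≡ 0 if and only if the kernels of M, D, K, and G have a nontrivial common intersection. -/
open Matrix Polynomial

theorem quadratic_dH_singular_iff_common_kernel
    (n : ℕ) (M D K G : Matrix (Fin n) (Fin n) ℝ)
    (hM : M.PosSemidef) (hD : D.PosSemidef) (hK : K.PosSemidef) (hG : Gᵀ = -G) :
    (((X : ℝ[X]) ^ 2) • M.map C - (X : ℝ[X]) • (G - D).map C + K.map C).det = 0 ↔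
      ∃ x : Fin n → ℝ, x ≠ 0 ∧ M.mulVec x = 0 ∧ D.mulVec x = 0 ∧
        K.mulVec x = 0 ∧ G.mulVec x = 0 := by
  set A : Matrix (Fin n) (Fin n) ℝ[X] :=
    ((X : ℝ[X]) ^ 2) • M.map C - (X : ℝ[X]) • (G - D).map C + K.map C with hA
  have heval : ∀ t : ℝ, (A.det).eval t = (t ^ 2 • M - t • (G - D) + K).det := by
    intro t
    have h0 : (evalRingHom t) A.det = (A.map (evalRingHom t)).det :=
      RingHom.map_det (evalRingHom t) A
    rw [show (A.map (evalRingHom t)) = t ^ 2 • M - t • (G - D) + K by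
      ext i j
      simp only [hA, Matrix.map_apply, Matrix.add_apply, Matrix.sub_apply, Matrix.smul_apply,
        smul_eq_mul, coe_evalRingHom, eval_add, eval_sub, eval_mul, eval_pow, eval_X, eval_C]] at h0
    simpa using h0
  -- skew-symmetry quadratic form vanishing, general vector
  have hskew : ∀ v : Fin n → ℝ, v ⬝ᵥ G *ᵥ v = 0 := by
    intro v
    have h1 : v ⬝ᵥ G *ᵥ v = v ᵥ* G ⬝ᵥ v := Matrix.dotProduct_mulVec v G v
    have h2 : v ᵥ* G = -(G *ᵥ v) := by
      rw [← Matrix.mulVec_transpose, hG, Matrix.neg_mulVec]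
    rw [h2, neg_dotProduct] at h1
    have h3 := dotProduct_comm (G *ᵥ v) v
    linarith
  constructor
  · intro hdet
    have h1 : (M - (G - D) + K).det = 0 := by
      have := heval 1
      rw [hdet] at this
      simpa using this.symm
    obtain ⟨v, hv, hmul⟩ := Matrix.exists_mulVec_eq_zero_iff.mpr h1
    have hdot : v ⬝ᵥ M *ᵥ v + v ⬝ᵥ D *ᵥ v + v ⬝ᵥ K *ᵥ v = 0 := by
      have := congrArg (fun w => v ⬝ᵥ w) hmul
      simp only [Matrix.add_mulVec, Matrix.sub_mulVec, dotProduct_add,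
        dotProduct_sub, dotProduct_zero] at this
      rw [hskew v] at this
      linarith
    have hMv0 : v ⬝ᵥ M *ᵥ v = 0 ∧ v ⬝ᵥ D *ᵥ v = 0 ∧ v ⬝ᵥ K *ᵥ v = 0 := by
      have h1 := hM.dotProduct_mulVec_nonneg v
      have h2 := hD.dotProduct_mulVec_nonneg v
      have h3 := hK.dotProduct_mulVec_nonneg v
      simp only [star_trivial] at h1 h2 h3
      refine ⟨by linarith, by linarith, by linarith⟩
    have hMv : M *ᵥ v = 0 := (hM.dotProduct_mulVec_zero_iff v).mp (by simpa using hMv0.1)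
    have hDv : D *ᵥ v = 0 := (hD.dotProduct_mulVec_zero_iff v).mp (by simpa using hMv0.2.1)
    have hKv : K *ᵥ v = 0 := (hK.dotProduct_mulVec_zero_iff v).mp (by simpa using hMv0.2.2)
    have hGv : G *ᵥ v = 0 := by
      have := hmul
      rw [Matrix.add_mulVec, Matrix.sub_mulVec, Matrix.sub_mulVec, hMv, hDv, hKv] at this
      simpa using this
    exact ⟨v, hv, hMv, hDv, hKv, hGv⟩
  · intro ⟨x, hx, hMx, hDx, hKx, hGx⟩
    have hall : ∀ t : ℝ, (A.det).eval t = 0 := by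
      intro t
      rw [heval t]
      refine Matrix.exists_mulVec_eq_zero_iff.mp ⟨x, hx, ?_⟩
      simp [Matrix.add_mulVec, Matrix.sub_mulVec, Matrix.smul_mulVec, hMx, hDx, hKx, hGx]
    exact Polynomial.funext fun r => by rw [hall r]; simp
end
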